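/- Define κ_pol : ℕ → ℝ by κ_pol(0) = κ_pol(1) = 0, κ_pol(n) = n·⌊n/2⌋·(⌊n/2⌋ + 5) for even n ≥ 2, and κ_pol(n) = n·(⌊n/2⌋² + 4·⌊n/2⌋ − 2) for odd n ≥ 3; and define κ_LU(n,δ) = (2/3)(n+1)³ − (1/2)(n+1)² − (1/6)(n+1) + (2(n+1)² − (n+1))·δ. Then for every integer n ≥ 0 and every integer δ ≥ 1 one has κ_pol(n) < κ_LU(n,δ). -/
import Mathlib


/-- The flop count of the efficient general basis transformation, as a real number. -/
noncomputable def kpolR (n : ℕ) : ℝ :=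
  if n ≤ 1 then 0
  else if n % 2 = 0 then (n : ℝ) * ((n / 2 : ℕ) : ℝ) * (((n / 2 : ℕ) : ℝ) + 5)
  else (n : ℝ) * (((n / 2 : ℕ) : ℝ) ^ 2 + 4 * ((n / 2 : ℕ) : ℝ) - 2)

/-- The total flop count of a `δ`-dimensional interpolation or least squares
approximation method based on LU decomposition. -/
noncomputable def kLU (n δ : ℕ) : ℝ :=
  (2 / 3 : ℝ) * ((n : ℝ) + 1) ^ 3 - (1 / 2 : ℝ) * ((n : ℝ) + 1) ^ 2
    - (1 / 6 : ℝ) * ((n : ℝ) + 1) + (2 * ((n : ℝ) + 1) ^ 2 - ((n : ℝ) + 1)) * (δ : ℝ)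

/-- `κ_pol(n) < κ_LU(n,δ)` for all `n ≥ 0` and `δ ≥ 1`. -/
theorem stmt_9 : ∀ (n δ : ℕ), 1 ≤ δ → kpolR n < kLU n δ := by
  intro n δ hδ
  have hn : (0:ℝ) ≤ (n:ℝ) := Nat.cast_nonneg n
  have hδ' : (1:ℝ) ≤ (δ:ℝ) := by exact_mod_cast hδ
  have hLU : kLU n 1 ≤ kLU n δ := by
    unfold kLU
    have h : (0:ℝ) ≤ 2 * ((n:ℝ)+1)^2 - ((n:ℝ)+1) := by nlinarith
    push_cast
    nlinarith
  refine lt_of_lt_of_le ?_ hLU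
  unfold kpolR kLU
  rcases le_or_gt n 1 with h1 | h1
  · simp only [if_pos h1]
    push_cast
    nlinarith
  · have h1' : ¬ n ≤ 1 := not_le.mpr h1
    rcases Nat.even_or_odd n with ⟨m, hm⟩ | ⟨m, hm⟩
    · have hmod : n % 2 = 0 := by omega
      have hdiv : n / 2 = m := by omega
      have hmr : (n:ℝ) = 2 * m := by rw [hm]; push_cast; ring
      have hm0 : (0:ℝ) ≤ (m:ℝ) := Nat.cast_nonneg m
      simp only [if_neg h1', if_pos hmod, hdiv, hmr]
      push_cast
      nlinarith
    · have hmod : ¬ n % 2 = 0 := by omega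
      have hdiv : n / 2 = m := by omega
      have hmr : (n:ℝ) = 2 * m + 1 := by rw [hm]; push_cast; ring
      have hm0 : (0:ℝ) ≤ (m:ℝ) := Nat.cast_nonneg m
      simp only [if_neg h1', if_neg hmod, hdiv, hmr]
      push_cast
      nlinarith
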